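/- Let G be a finite simple undirected graph with edge set E, and let 𝕊_cyc be the system of all orientations d of G such that G⃗^d contains a directed cycle. Then: (i) sstr(𝕊_cyc) = {X ⊆ E : G_{E−X} contains a cycle}; (ii) str(¬𝕊_cyc) = {X ⊆ E : G_X is a forest}. -/

import Mathlib

/-- `𝕊` shatters `Y ⊆ X`: for every `f ∈ {0,1}^Y` there is `g ∈ {0,1}^{X−Y}` with `g⋆f ∈ S`;
equivalently, every `f : α → Bool` agrees on `Y` with some member of `S`. -/
def Shatters {α : Type*} (S : Set (α → Bool)) (Y : Set α) : Prop :=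
  ∀ f : α → Bool, ∃ h ∈ S, Set.EqOn h f Y

/-- `𝕊` strongly shatters `Y ⊆ X`: there is `g ∈ {0,1}^{X−Y}` such that for every
`f ∈ {0,1}^Y`, `g⋆f ∈ S` (here `g⋆f` is expressed as the member `h` of `S` agreeing
with `f` on `Y` and with `g` on `Yᶜ`). -/
def StronglyShatters {α : Type*} (S : Set (α → Bool)) (Y : Set α) : Prop :=
  ∃ g : α → Bool, ∀ f : α → Bool, ∃ h ∈ S, Set.EqOn h f Y ∧ Set.EqOn h g Yᶜ

/-- The family of sets shattered by the system. -/
def str {α : Type*} (S : Set (α → Bool)) : Set (Set α) :=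
  {Y | Shatters S Y}

/-- The family of sets strongly shattered by the system. -/
def sstr {α : Type*} (S : Set (α → Bool)) : Set (Set α) :=
  {Y | StronglyShatters S Y}


/-- The arc relation of the digraph obtained by orienting the edges of `X ⊆ E(G)`
according to `d` (relative to the reference orientation `ρ`): `d e = false` keeps
the reference direction `(ρ e).1 → (ρ e).2`, `d e = true` reverses it. -/
def arcsOn {V : Type*} (G : SimpleGraph V) (ρ : Sym2 V → V × V)
    (X : Set G.edgeSet) (d : G.edgeSet → Bool) : V → V → Prop :=
  fun u v => ∃ e : G.edgeSet, e ∈ X ∧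
    ((d e = false ∧ ρ e.val = (u, v)) ∨ (d e = true ∧ ρ e.val = (v, u)))

/-- The arc relation of the digraph `G⃗^d` obtained by orienting all edges of `G`
according to `d`. -/
def arcs {V : Type*} (G : SimpleGraph V) (ρ : Sym2 V → V × V)
    (d : G.edgeSet → Bool) : V → V → Prop :=
  arcsOn G ρ Set.univ d

/-- A digraph contains a directed cycle iff some vertex lies on a closed directed
walk of positive length. -/
def HasDiCycle {V : Type*} (R : V → V → Prop) : Prop :=
  ∃ v, Relation.TransGen R v v

/-- The subgraph `G_X` of `G` on the full vertex set, with edge set `X ⊆ E(G)`. -/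
def subgraphOf {V : Type*} (G : SimpleGraph V) (X : Set G.edgeSet) : SimpleGraph V :=
  SimpleGraph.fromEdgeSet (Subtype.val '' X)


section Helpers
open SimpleGraph Relation
variable {V : Type*}



lemma walk_rtg {H : SimpleGraph V} {R : V → V → Prop} :
    ∀ {a b : V} (p : H.Walk a b),
      (∀ d ∈ p.darts, R d.toProd.1 d.toProd.2) → Relation.ReflTransGen R a b := by
  intro a b p
  induction p with
  | nil => intro _; exact .refl
  | cons h q ih =>
    intro hd
    refine Relation.ReflTransGen.head (hd _ (by simp; exact Or.inl rfl)) (ih ?_)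
    intro d hdm; exact hd d (by simp [hdm])

lemma directed_path_of_transGen {H : SimpleGraph V} (hH : H.IsAcyclic)
    {R : V → V → Prop} (hadj : ∀ u w, R u w → H.Adj u w)
    (hasym : ∀ u w, R u w → ¬ R w u) {x y : V} (hxy : Relation.TransGen R x y) :
    ∃ p : H.Walk x y, p.IsPath ∧ (∀ d ∈ p.darts, R d.toProd.1 d.toProd.2) ∧ x ≠ y := by
  classical
  induction hxy with
  | single h =>
    refine ⟨SimpleGraph.Walk.cons (hadj _ _ h) SimpleGraph.Walk.nil, ?_, ?_, (hadj _ _ h).ne⟩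
    · simp [SimpleGraph.Walk.isPath_def, (hadj _ _ h).ne]
    · intro d hd; simp at hd; subst hd; exact h
  | @tail b c hab hbc ih =>
    obtain ⟨p, hp, hdir, hxb⟩ := ih
    by_cases hc : c ∈ p.support
    · exfalso
      have hcb : c ≠ b := fun hh => (hadj _ _ hbc).ne (hh ▸ rfl)
      have hr : (p.dropUntil c hc).IsPath := hp.dropUntil hc
      have hrdir : ∀ d ∈ (p.dropUntil c hc).darts, R d.toProd.1 d.toProd.2 :=
        fun d hd => hdir d (p.darts_dropUntil_subset hc hd)
      have := SimpleGraph.isAcyclic_iff_path_unique.mp hH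
        ⟨p.dropUntil c hc, hr⟩ (SimpleGraph.Path.singleton ((hadj _ _ hbc).symm))
      have hval : p.dropUntil c hc =
          SimpleGraph.Walk.cons ((hadj _ _ hbc).symm) SimpleGraph.Walk.nil :=
        congrArg Subtype.val this
      have : R c b := by
        have hd : (⟨(c, b), (hadj _ _ hbc).symm⟩ : H.Dart) ∈ (p.dropUntil c hc).darts := by
          rw [hval]; simp
        exact hrdir _ hd
      exact hasym _ _ hbc this
    · refine ⟨p.concat (hadj _ _ hbc), ?_, ?_, ?_⟩
      · rw [SimpleGraph.Walk.isPath_def, SimpleGraph.Walk.support_concat]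
        rw [List.nodup_append]
        simp [hp.support_nodup, hc]
        rintro a ha rfl; exact hc ha
      · intro d hd
        rw [SimpleGraph.Walk.darts_concat, List.concat_eq_append] at hd
        rcases List.mem_append.mp hd with hd | hd
        · exact hdir d hd
        · simp at hd; subst hd; exact hbc
      · intro hxc; exact hc (hxc ▸ p.start_mem_support)

lemma no_loop {H : SimpleGraph V} (hH : H.IsAcyclic)
    {R : V → V → Prop} (hadj : ∀ u w, R u w → H.Adj u w)
    (hasym : ∀ u w, R u w → ¬ R w u) {x : V} (hxy : Relation.TransGen R x x) : False := by
  obtain ⟨_, _, _, hne⟩ := directed_path_of_transGen hH hadj hasym hxy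
  exact hne rfl

lemma arcsOn_adj {G : SimpleGraph V} {ρ : Sym2 V → V × V}
    (hρ : ∀ e ∈ G.edgeSet, Sym2.mk (ρ e).1 (ρ e).2 = e) {X : Set G.edgeSet}
    {f : G.edgeSet → Bool} {u w : V} (h : arcsOn G ρ X f u w) :
    (subgraphOf G X).Adj u w := by
  obtain ⟨e, heX, hcase⟩ := h
  have hmk : Sym2.mk (ρ e.val).1 (ρ e.val).2 = e.val := hρ e.val e.property
  have hval : (e : Sym2 V) = s(u, w) := by
    rcases hcase with ⟨-, hp⟩ | ⟨-, hp⟩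
    · rw [← hmk, hp]
    · rw [← hmk, hp]; exact Sym2.eq_swap
  have hne : u ≠ w := by
    have : s(u, w) ∈ G.edgeSet := hval ▸ e.property
    exact (G.mem_edgeSet.mp this).ne
  exact (SimpleGraph.fromEdgeSet_adj _).mpr ⟨⟨e, heX, hval⟩, hne⟩

lemma arcsOn_asymm {G : SimpleGraph V} {ρ : Sym2 V → V × V}
    (hρ : ∀ e ∈ G.edgeSet, Sym2.mk (ρ e).1 (ρ e).2 = e) {X : Set G.edgeSet}
    {f : G.edgeSet → Bool} {u w : V} (h : arcsOn G ρ X f u w)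
    (h' : arcsOn G ρ X f w u) : False := by
  have hne : u ≠ w := (arcsOn_adj hρ h).ne
  obtain ⟨e, heX, hcase⟩ := h
  obtain ⟨e', he'X, hcase'⟩ := h'
  have hmk : Sym2.mk (ρ e.val).1 (ρ e.val).2 = e.val := hρ e.val e.property
  have hmk' : Sym2.mk (ρ e'.val).1 (ρ e'.val).2 = e'.val := hρ e'.val e'.property
  have hee' : e = e' := by
    apply Subtype.ext
    rw [← hmk, ← hmk']
    rcases hcase with ⟨-, hp⟩ | ⟨-, hp⟩ <;> rcases hcase' with ⟨-, hp'⟩ | ⟨-, hp'⟩ <;>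
      rw [hp, hp'] <;> first | rfl | exact Sym2.eq_swap
  subst hee'
  rcases hcase with ⟨h1, h2⟩ | ⟨h1, h2⟩ <;> rcases hcase' with ⟨h3, h4⟩ | ⟨h3, h4⟩
  · rw [h2] at h4; injection h4 with ha _; exact hne ha
  · exact absurd (h1.symm.trans h3) (by simp)
  · exact absurd (h3.symm.trans h1) (by simp)
  · rw [h2] at h4; injection h4 with ha _; exact hne ha.symm

lemma lemA {G : SimpleGraph V} {ρ : Sym2 V → V × V}
    (hρ : ∀ e ∈ G.edgeSet, Sym2.mk (ρ e).1 (ρ e).2 = e) {X : Set G.edgeSet}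
    (hac : (subgraphOf G X).IsAcyclic) (f : G.edgeSet → Bool) :
    ∃ d : G.edgeSet → Bool, Set.EqOn d f X ∧ ¬ HasDiCycle (arcs G ρ d) := by
  classical
  set R₀ := arcsOn G ρ X f with hR₀
  have hadj : ∀ u w, R₀ u w → (subgraphOf G X).Adj u w := fun u w h => arcsOn_adj hρ h
  have hasym : ∀ u w, R₀ u w → ¬ R₀ w u := fun u w h h' => arcsOn_asymm hρ h h'
  set r : V → V → Prop := Relation.ReflTransGen R₀ with hr
  have hloop : ∀ x, ¬ Relation.TransGen R₀ x x := fun x h => no_loop hac hadj hasym h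
  haveI : IsPartialOrder V r :=
    { refl := fun a => Relation.ReflTransGen.refl
      trans := fun a b c h1 h2 => h1.trans h2
      antisymm := fun a b h1 h2 => by
        by_contra hne
        rcases Relation.reflTransGen_iff_eq_or_transGen.mp h1 with rfl | h1'
        · exact hne rfl
        rcases Relation.reflTransGen_iff_eq_or_transGen.mp h2 with heq | h2'
        · exact hne heq
        exact hloop a (h1'.trans h2') }
  obtain ⟨s, hlin, hrs⟩ := extend_partialOrder r
  refine ⟨fun e => if e ∈ X then f e else (if s (ρ e.val).1 (ρ e.val).2 then false else true),
    fun e he => by simp [he], ?_⟩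
  rintro ⟨v, hv⟩
  set S' : V → V → Prop := fun u v => s u v ∧ u ≠ v with hS'
  have htrans : Transitive S' := by
    rintro a b c ⟨h1, h1'⟩ ⟨h2, h2'⟩
    refine ⟨hlin.toIsPartialOrder.toIsPreorder.toIsTrans.trans a b c h1 h2, fun hac' => ?_⟩
    subst hac'
    exact h1' (hlin.toIsPartialOrder.toAntisymm.antisymm _ _ h1 h2)
  have hsub : ∀ u w, arcs G ρ (fun e => if e ∈ X then f e else
      (if s (ρ e.val).1 (ρ e.val).2 then false else true)) u w → S' u w := by
    rintro u w ⟨e, -, hcase⟩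
    have hne : u ≠ w := by
      have hmk : Sym2.mk (ρ e.val).1 (ρ e.val).2 = e.val := hρ e.val e.property
      have : (e : Sym2 V) = s(u, w) := by
        rcases hcase with ⟨-, hp⟩ | ⟨-, hp⟩
        · rw [← hmk, hp]
        · rw [← hmk, hp]; exact Sym2.eq_swap
      have : s(u, w) ∈ G.edgeSet := this ▸ e.property
      exact (G.mem_edgeSet.mp this).ne
    by_cases heX : e ∈ X
    · have hR : R₀ u w := ⟨e, heX, by simpa [heX] using hcase⟩
      exact ⟨hrs u w (Relation.ReflTransGen.single hR), hne⟩
    · refine ⟨?_, hne⟩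
      rcases hcase with ⟨hb, hp⟩ | ⟨hb, hp⟩
      · simp only [if_neg heX] at hb
        by_contra hsuw
        rw [hp] at hb
        simp [hsuw] at hb
      · simp only [if_neg heX] at hb
        rw [hp] at hb
        by_cases hswu : s w u
        · simp [hswu] at hb
        · rcases hlin.toTotal.total u w with h | h
          · exact h
          · exact absurd h hswu
  have : Relation.TransGen S' v v := Relation.TransGen.mono hsub _ _ hv
  rw [@Relation.transGen_eq_self _ S' ⟨fun _ _ _ h1 h2 => htrans h1 h2⟩] at this
  exact this.2 rfl

lemma lemB {G : SimpleGraph V} {ρ : Sym2 V → V × V}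
    (hρ : ∀ e ∈ G.edgeSet, Sym2.mk (ρ e).1 (ρ e).2 = e) {Y : Set G.edgeSet}
    (hnac : ¬ (subgraphOf G Y).IsAcyclic) :
    ∃ f : G.edgeSet → Bool, ∀ h : G.edgeSet → Bool,
      Set.EqOn h f Y → HasDiCycle (arcs G ρ h) := by
  classical
  rw [SimpleGraph.IsAcyclic] at hnac
  push_neg at hnac
  obtain ⟨v, c, hc⟩ := hnac
  have hnodup : (c.darts.map SimpleGraph.Dart.edge).Nodup :=
    hc.isCircuit.isTrail.edges_nodup
  set L : List (V × V) := c.darts.map (fun d => d.toProd) with hL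
  refine ⟨fun e => if (ρ e.val).swap ∈ L then true else false, ?_⟩
  intro h hEq
  have hdarts : ∀ d ∈ c.darts, arcs G ρ h d.toProd.1 d.toProd.2 := by
    rintro ⟨⟨u, w⟩, hadj⟩ hd
    show arcs G ρ h u w
    have hne : u ≠ w := hadj.ne
    obtain ⟨⟨e, heY, hev⟩, -⟩ := (SimpleGraph.fromEdgeSet_adj _).mp hadj
    have hmk : Sym2.mk (ρ e.val).1 (ρ e.val).2 = e.val := hρ e.val e.property
    have hmk2 : Sym2.mk (ρ e.val).1 (ρ e.val).2 = s(u, w) := by rw [hmk, hev]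
    have hheq : h e = (if (ρ e.val).swap ∈ L then true else false) := hEq heY
    rcases (Sym2.mk_eq_mk_iff (p := ρ e.val) (q := (u, w))).mp hmk2 with hp | hp
    · have hnot : (ρ e.val).swap ∉ L := by
        rw [hp]
        simp only [Prod.swap_prod_mk]
        intro hmem
        obtain ⟨d', hd', hd'p⟩ := List.mem_map.mp hmem
        have hedge : SimpleGraph.Dart.edge d' =
            SimpleGraph.Dart.edge ⟨(u, w), hadj⟩ := by
          show s(d'.toProd.1, d'.toProd.2) = s(u, w)
          rw [hd'p]
          exact Sym2.eq_swap
        have hdd : d' = ⟨(u, w), hadj⟩ :=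
          List.inj_on_of_nodup_map hnodup hd' hd hedge
        rw [hdd] at hd'p
        injection hd'p with h1 _
        exact hne h1
      have hfe : h e = false := by
        rw [hheq]
        exact if_neg hnot
      exact ⟨e, Set.mem_univ e, Or.inl ⟨hfe, hp⟩⟩
    · have hswap : (ρ e.val).swap ∈ L := by
        rw [hp]
        simp only [Prod.swap_swap]
        exact List.mem_map.mpr ⟨⟨(u, w), hadj⟩, hd, rfl⟩
      have hfe : h e = true := by
        rw [hheq]
        exact if_pos hswap
      refine ⟨e, Set.mem_univ e, Or.inr ⟨hfe, ?_⟩⟩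
      rw [hp]
      rfl
  refine ⟨v, ?_⟩
  cases c with
  | nil => exact absurd rfl hc.isCircuit.ne_nil
  | cons hadj q =>
    rename_i w
    refine Relation.TransGen.head' (hdarts ⟨(v, w), hadj⟩ (by simp)) ?_
    exact walk_rtg q (fun d hd => hdarts d (by simp [hd]))

end Helpers

/-- for the system `𝕊_cyc` of orientations containing a directed cycle,
(i) `sstr(𝕊_cyc) = {X ⊆ E : G_{E−X} has a cycle}` and
(ii) `str(¬𝕊_cyc) = {X ⊆ E : G_X is a forest}`. -/
theorem sstr_str_cyclic {V : Type*} [Fintype V] (G : SimpleGraph V)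
    (ρ : Sym2 V → V × V) (hρ : ∀ e ∈ G.edgeSet, Sym2.mk (ρ e).1 (ρ e).2 = e) :
    sstr {d : G.edgeSet → Bool | HasDiCycle (arcs G ρ d)} =
      {X : Set G.edgeSet | ¬ (subgraphOf G Xᶜ).IsAcyclic} ∧
    str ({d : G.edgeSet → Bool | HasDiCycle (arcs G ρ d)}ᶜ) =
      {X : Set G.edgeSet | (subgraphOf G X).IsAcyclic} := by
  constructor
  · ext X
    simp only [sstr, Set.mem_setOf_eq, StronglyShatters]
    constructor
    · rintro ⟨g, hg⟩ hac
      obtain ⟨d, hdg, hnd⟩ := lemA hρ hac g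
      obtain ⟨h, hS, hX, hXc⟩ := hg d
      have hhd : h = d := by
        funext e
        by_cases he : e ∈ X
        · exact hX he
        · rw [hXc he, hdg he]
      exact hnd (hhd ▸ hS)
    · intro hnac
      obtain ⟨g, hg⟩ := lemB hρ hnac
      refine ⟨g, fun f => ?_⟩
      classical
      refine ⟨fun e => if e ∈ X then f e else g e, ?_, ?_, ?_⟩
      · apply hg
        intro e he
        simp only []
        rw [if_neg he]
      · intro e he
        simp only []
        rw [if_pos he]
      · intro e he
        simp only []
        rw [if_neg he]
  · ext X
    simp only [str, Set.mem_setOf_eq, Shatters]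
    constructor
    · intro hsh
      by_contra hnac
      obtain ⟨f, hf⟩ := lemB hρ hnac
      obtain ⟨h, hS, hEq⟩ := hsh f
      exact hS (hf h hEq)
    · intro hac f
      obtain ⟨d, hdf, hnd⟩ := lemA hρ hac f
      exact ⟨d, hnd, hdf⟩
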